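/- The PCA Majority(α) on {0,1}^Z is conjugate to the PCA FINAE(α) via checkerboard bit-flips: Majority(α) = flip-odd ∘ FINAE(α) ∘ flip-even as maps on measures (equivalently, the local transition functions satisfy the corresponding identity). Consequently, if π is an invariant measure of FINAE(α), then (flip-odd(π) + flip-even(π))/2 is an invariant measure of Majority(α). -/

import Mathlib

open MeasureTheory
open scoped ENNReal

/-- The majority of three bits. -/
def maj (x y z : Bool) : Bool := (x && y) || (y && z) || (x && z)

/-- The 'flip-if-not-all-equal' rule (elementary cellular automaton 178). -/
def finaeRule (x y z : Bool) : Bool := if x = y ∧ y = z then y else !y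

/-- Flip the bits at odd positions. -/
def flipOdd (x : ℤ → Bool) : ℤ → Bool := fun i => if i % 2 = 1 then !x i else x i

/-- Flip the bits at even positions. -/
def flipEven (x : ℤ → Bool) : ℤ → Bool := fun i => if i % 2 = 0 then !x i else x i

lemma mFO : Measurable flipOdd := by
  refine measurable_pi_lambda _ fun i => ?_
  unfold flipOdd
  split
  · exact (measurable_of_countable Bool.not).comp (measurable_pi_apply i)
  · exact measurable_pi_apply i

lemma mFE : Measurable flipEven := by
  refine measurable_pi_lambda _ fun i => ?_
  unfold flipEven
  split
  · exact (measurable_of_countable Bool.not).comp (measurable_pi_apply i)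
  · exact measurable_pi_apply i

lemma FO_FO (x : ℤ → Bool) : flipOdd (flipOdd x) = x := by
  funext i; simp [flipOdd]; split <;> simp
lemma FE_FE (x : ℤ → Bool) : flipEven (flipEven x) = x := by
  funext i; simp [flipEven]; split <;> simp

/-- basic cylinders -/
def Cyl : Set (Set (ℤ → Bool)) :=
  {s | ∃ (K : Finset ℤ) (y : ℤ → Bool), s = {z | ∀ k ∈ K, z k = y k}}

lemma cyl_meas {K : Finset ℤ} {y : ℤ → Bool} :
    MeasurableSet {z : ℤ → Bool | ∀ k ∈ K, z k = y k} := by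
  have : {z : ℤ → Bool | ∀ k ∈ K, z k = y k} = ⋂ k ∈ (K : Set ℤ), {z | z k = y k} := by
    ext z; simp
  rw [this]
  refine MeasurableSet.biInter K.countable_toSet fun k _ => ?_
  have : {z : ℤ → Bool | z k = y k} = (fun z : ℤ → Bool => z k) ⁻¹' {y k} := by
    ext z; simp
  rw [this]
  exact (measurable_pi_apply k) (measurableSet_singleton _)

lemma isPi_Cyl : IsPiSystem Cyl := by
  rintro s ⟨K, y, rfl⟩ t ⟨K', y', rfl⟩ ⟨w, hw⟩
  refine ⟨K ∪ K', w, ?_⟩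
  obtain ⟨hw1, hw2⟩ := hw
  ext z
  simp only [Set.mem_inter_iff, Set.mem_setOf_eq, Finset.mem_union]
  constructor
  · rintro ⟨h1, h2⟩ k hk
    rcases hk with hk | hk
    · rw [h1 k hk, ← hw1 k hk]
    · rw [h2 k hk, ← hw2 k hk]
  · intro h
    exact ⟨fun k hk => (h k (Or.inl hk)).trans (hw1 k hk),
           fun k hk => (h k (Or.inr hk)).trans (hw2 k hk)⟩

lemma gen_Cyl : (inferInstance : MeasurableSpace (ℤ → Bool)) =
    MeasurableSpace.generateFrom Cyl := by
  refine le_antisymm ?_ (MeasurableSpace.generateFrom_le ?_)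
  · refine iSup_le fun k => ?_
    rintro s ⟨t, -, rfl⟩
    by_cases h1 : true ∈ t <;> by_cases h0 : false ∈ t
    · have : (fun z : ℤ → Bool => z k) ⁻¹' t = Set.univ := by
        ext z; simp; cases z k <;> assumption
      rw [this]; exact MeasurableSet.univ
    · have : (fun z : ℤ → Bool => z k) ⁻¹' t = {z | ∀ j ∈ ({k} : Finset ℤ), z j = true} := by
        ext z; simp; cases z k <;> simp_all
      rw [this]
      exact MeasurableSpace.measurableSet_generateFrom ⟨{k}, fun _ => true, rfl⟩
    · have : (fun z : ℤ → Bool => z k) ⁻¹' t = {z | ∀ j ∈ ({k} : Finset ℤ), z j = false} := by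
        ext z; simp; cases z k <;> simp_all
      rw [this]
      exact MeasurableSpace.measurableSet_generateFrom ⟨{k}, fun _ => false, rfl⟩
    · have : (fun z : ℤ → Bool => z k) ⁻¹' t = ∅ := by
        ext z; simp; cases z k <;> simp_all
      rw [this]; exact (MeasurableSpace.generateFrom Cyl).measurableSet_empty
  · rintro s ⟨K, y, rfl⟩; exact cyl_meas

example : True := trivial

lemma finae_maj1 : ∀ a b c : Bool, finaeRule a (!b) c = maj a b c := by decide
lemma finae_maj2 : ∀ a b c : Bool, finaeRule (!a) b (!c) = !(maj a b c) := by decide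

lemma FO_pre (K : Finset ℤ) (y : ℤ → Bool) :
    flipOdd ⁻¹' {z | ∀ k ∈ K, z k = y k} = {z | ∀ k ∈ K, z k = flipOdd y k} := by
  ext z
  simp only [Set.mem_preimage, Set.mem_setOf_eq, flipOdd]
  refine forall₂_congr fun k _ => ?_
  split <;> [cases z k <;> cases y k <;> simp; rfl]

lemma FE_pre (K : Finset ℤ) (y : ℤ → Bool) :
    flipEven ⁻¹' {z | ∀ k ∈ K, z k = y k} = {z | ∀ k ∈ K, z k = flipEven y k} := by
  ext z
  simp only [Set.mem_preimage, Set.mem_setOf_eq, flipEven]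
  refine forall₂_congr fun k _ => ?_
  split <;> [cases z k <;> cases y k <;> simp; rfl]


/-- The PCA Majority(α) on `{0,1}^ℤ` is conjugate to FINAE(α) via checkerboard
bit flips: `Majority(α) = flip-odd ∘ FINAE(α) ∘ flip-even` as maps on
probability measures.  Consequently, if `π` is invariant for FINAE(α), then
`(flip-odd(π) + flip-even(π))/2` is invariant for Majority(α).  Here `κM` and
`κF` are the one-step kernels of Majority(α) and FINAE(α), characterized on
cylinders. -/
theorem stmt14 (α : ℝ) (hα0 : 0 < α) (hα1 : α < 1)
    (κM κF : (ℤ → Bool) → Measure (ℤ → Bool))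
    (hκMm : Measurable κM) (hκFm : Measurable κF)
    (hκMprob : ∀ x, IsProbabilityMeasure (κM x))
    (hκFprob : ∀ x, IsProbabilityMeasure (κF x))
    (hκM : ∀ (x : ℤ → Bool) (K : Finset ℤ) (y : ℤ → Bool),
      κM x {z | ∀ k ∈ K, z k = y k} =
        ∏ k ∈ K, ENNReal.ofReal
          (α * (if y k = maj (x (k - 1)) (x k) (x (k + 1)) then 1 else 0)
            + (1 - α) * (if y k = ! x k then 1 else 0)))
    (hκF : ∀ (x : ℤ → Bool) (K : Finset ℤ) (y : ℤ → Bool),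
      κF x {z | ∀ k ∈ K, z k = y k} =
        ∏ k ∈ K, ENNReal.ofReal
          (α * (if y k = finaeRule (x (k - 1)) (x k) (x (k + 1)) then 1 else 0)
            + (1 - α) * (if y k = x k then 1 else 0))) :
    (∀ μ : Measure (ℤ → Bool), IsProbabilityMeasure μ →
      Measure.bind μ κM
        = Measure.map flipOdd (Measure.bind (Measure.map flipEven μ) κF)) ∧
    (∀ π : Measure (ℤ → Bool), IsProbabilityMeasure π → Measure.bind π κF = π →
      Measure.bind ((2 : ℝ≥0∞)⁻¹ • (Measure.map flipOdd π + Measure.map flipEven π)) κM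
        = (2 : ℝ≥0∞)⁻¹ • (Measure.map flipOdd π + Measure.map flipEven π)) := by
  have key1 : ∀ x, κM x = (κF (flipEven x)).map flipOdd := by
    intro x
    haveI := hκFprob (flipEven x)
    haveI : IsProbabilityMeasure ((κF (flipEven x)).map flipOdd) :=
      Measure.isProbabilityMeasure_map mFO.aemeasurable
    refine ext_of_generate_finite Cyl gen_Cyl isPi_Cyl ?_ (by simp [measure_univ])
    rintro s ⟨K, y, rfl⟩
    rw [Measure.map_apply mFO cyl_meas, FO_pre, hκF, hκM]
    refine Finset.prod_congr rfl fun k _ => ?_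
    rcases Int.emod_two_eq k with h | h
    · have h1 : ¬ (k % 2 = 1) := by omega
      have h2 : ¬ ((k - 1) % 2 = 0) := by omega
      have h3 : ¬ ((k + 1) % 2 = 0) := by omega
      simp [flipOdd, flipEven, h, h1, h2, h3, finae_maj1]
    · have h2 : (k - 1) % 2 = 0 := by omega
      have h3 : (k + 1) % 2 = 0 := by omega
      have h4 : ¬ (k % 2 = 0) := by omega
      have e1 : flipOdd y k = !y k := by simp [flipOdd, h]
      have e2 : flipEven x k = x k := by simp [flipEven, h4]
      have e3 : flipEven x (k - 1) = !x (k - 1) := by simp [flipEven, h2]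
      have e4 : flipEven x (k + 1) = !x (k + 1) := by simp [flipEven, h3]
      rw [e1, e2, e3, e4, finae_maj2]
      generalize maj (x (k - 1)) (x k) (x (k + 1)) = m
      cases m <;> cases y k <;> cases x k <;> simp
  have key2 : ∀ x, κM x = (κF (flipOdd x)).map flipEven := by
    intro x
    haveI := hκFprob (flipOdd x)
    haveI : IsProbabilityMeasure ((κF (flipOdd x)).map flipEven) :=
      Measure.isProbabilityMeasure_map mFE.aemeasurable
    refine ext_of_generate_finite Cyl gen_Cyl isPi_Cyl ?_ (by simp [measure_univ])
    rintro s ⟨K, y, rfl⟩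
    rw [Measure.map_apply mFE cyl_meas, FE_pre, hκF, hκM]
    refine Finset.prod_congr rfl fun k _ => ?_
    rcases Int.emod_two_eq k with h | h
    · have h2 : (k - 1) % 2 = 1 := by omega
      have h3 : (k + 1) % 2 = 1 := by omega
      have h4 : ¬ (k % 2 = 1) := by omega
      have e1 : flipEven y k = !y k := by simp [flipEven, h]
      have e2 : flipOdd x k = x k := by simp [flipOdd, h4]
      have e3 : flipOdd x (k - 1) = !x (k - 1) := by simp [flipOdd, h2]
      have e4 : flipOdd x (k + 1) = !x (k + 1) := by simp [flipOdd, h3]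
      rw [e1, e2, e3, e4, finae_maj2]
      generalize maj (x (k - 1)) (x k) (x (k + 1)) = m
      cases m <;> cases y k <;> cases x k <;> simp
    · have h1 : ¬ (k % 2 = 0) := by omega
      have h2 : ¬ ((k - 1) % 2 = 1) := by omega
      have h3 : ¬ ((k + 1) % 2 = 1) := by omega
      simp [flipOdd, flipEven, h, h1, h2, h3, finae_maj1]
  constructor
  · intro μ _
    ext s hs
    have hmF : Measurable (fun x => κF x (flipOdd ⁻¹' s)) :=
      (Measure.measurable_coe (mFO hs)).comp hκFm
    rw [Measure.bind_apply hs hκMm.aemeasurable, Measure.map_apply mFO hs,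
      Measure.bind_apply (mFO hs) hκFm.aemeasurable, lintegral_map hmF mFE]
    refine lintegral_congr fun x => ?_
    rw [key1 x, Measure.map_apply mFO hs]
  · intro π hπ hinv
    have A : Measure.bind (Measure.map flipOdd π) κM = Measure.map flipEven π := by
      ext s hs
      have hmM : Measurable (fun x => κM x s) := (Measure.measurable_coe hs).comp hκMm
      rw [Measure.bind_apply hs hκMm.aemeasurable, lintegral_map hmM mFO, Measure.map_apply mFE hs]
      conv_rhs => rw [← hinv, Measure.bind_apply (mFE hs) hκFm.aemeasurable]
      refine lintegral_congr fun x => ?_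
      rw [key2 (flipOdd x), FO_FO, Measure.map_apply mFE hs]
    have B : Measure.bind (Measure.map flipEven π) κM = Measure.map flipOdd π := by
      ext s hs
      have hmM : Measurable (fun x => κM x s) := (Measure.measurable_coe hs).comp hκMm
      rw [Measure.bind_apply hs hκMm.aemeasurable, lintegral_map hmM mFE, Measure.map_apply mFO hs]
      conv_rhs => rw [← hinv, Measure.bind_apply (mFO hs) hκFm.aemeasurable]
      refine lintegral_congr fun x => ?_
      rw [key1 (flipEven x), FE_FE, Measure.map_apply mFO hs]
    ext s hs
    rw [Measure.bind_apply hs hκMm.aemeasurable, Measure.smul_apply, Measure.add_apply,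
      lintegral_smul_measure, lintegral_add_measure,
      ← Measure.bind_apply hs hκMm.aemeasurable, ← Measure.bind_apply hs hκMm.aemeasurable, A, B,
      smul_eq_mul]
    ring
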